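/- There exist absolute constants C > 0 and c > 0 (independent of n, k, and s) such that for every n ≥ 1, every real k ≥ 1, and every nonzero signal s ∈ ℂ^N with N = 2ⁿ, the number of Hankel codewords that are heavy for s, i.e. the number of pairs (P, ℓ) with P an n×n Hankel matrix over ℤ₂ and ℓ ∈ ℤ₂ⁿ such that |⟨s, φ_{P,ℓ,0}⟩|² ≥ (1/k)·‖s‖², is at most C·k^c. -/

import Mathlib

open Matrix

/-- The exponentiated ℤ₄-RM(2,n) codeword φ_{Q,ℓ,ε} ∈ ℂ^{2ⁿ}, indexed by y ∈ {0,1}ⁿ: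
φ_{Q,ℓ,ε}(y) = 2^{-n/2}·i^{yᵀQy + 2ℓᵀy + ε}, entries lifted to {0,1} ⊆ ℤ. -/
noncomputable def rmPhi (n : ℕ) (Q : Matrix (Fin n) (Fin n) (ZMod 2))
    (ℓ : Fin n → ZMod 2) (ε : ZMod 4) (y : Fin n → ZMod 2) : ℂ :=
  (1 / Real.sqrt (2 ^ n)) *
    Complex.I ^ ((∑ j : Fin n, ∑ k : Fin n,
        ((y j).val : ℤ) * ((Q j k).val : ℤ) * ((y k).val : ℤ))
      + 2 * ∑ j : Fin n, ((ℓ j).val : ℤ) * ((y j).val : ℤ) + (ε.val : ℤ))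

/-- The Hermitian inner product ⟨u,v⟩ = Σ_y u(y)·conj(v(y)). -/
noncomputable def herm {ι : Type*} [Fintype ι] (u v : ι → ℂ) : ℂ :=
  ∑ y : ι, u y * (starRingEnd ℂ) (v y)

namespace S19
open Finset

abbrev V (n : ℕ) := Fin n → ZMod 2

noncomputable def zI (m : ℤ) : ℂ := Complex.I ^ m

lemma zI_add (a b : ℤ) : zI (a + b) = zI a * zI b := zpow_add₀ Complex.I_ne_zero a b

lemma zI_abs (a : ℤ) : ‖zI a‖ = 1 := by
  rw [zI, norm_zpow, Complex.norm_I, _root_.one_zpow]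

lemma zI_conj (a : ℤ) : (starRingEnd ℂ) (zI a) = zI (-a) := by
  have h : (starRingEnd ℂ) Complex.I = Complex.I⁻¹ := by
    rw [Complex.conj_I, Complex.inv_I]
  rw [zI, map_zpow₀, h, _root_.inv_zpow, ← _root_.zpow_neg, zI]

lemma zI_zero : zI 0 = 1 := rfl

lemma zI_four (t : ℤ) : zI (4 * t) = 1 := by
  rw [zI, _root_.zpow_mul]
  have : Complex.I ^ (4:ℤ) = 1 := by
    rw [show (4:ℤ) = (4:ℕ) from rfl, zpow_natCast]
    simp [pow_succ, Complex.I_mul_I]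
  rw [this, _root_.one_zpow]

lemma zI_two (a : ℤ) : zI (2 * a) = (-1 : ℂ) ^ a := by
  rw [zI, _root_.zpow_mul]
  congr 1
  rw [show (2:ℤ) = (2:ℕ) from rfl, zpow_natCast, Complex.I_sq]

lemma neg_one_zpow_even {a : ℤ} (h : (2:ℤ) ∣ a) : (-1 : ℂ) ^ a = 1 := by
  obtain ⟨t, rfl⟩ := h
  rw [_root_.zpow_mul]
  norm_num

lemma neg_one_zpow_odd {a : ℤ} (h : ¬ (2:ℤ) ∣ a) : (-1 : ℂ) ^ a = -1 := by
  obtain ⟨t, rfl⟩ : ∃ t, a = 2 * t + 1 := ⟨a / 2, by omega⟩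
  rw [zpow_add₀ (by norm_num : (-1:ℂ) ≠ 0), _root_.zpow_mul]
  norm_num

lemma neg_one_zpow_sub_odd {a b : ℤ} (h : ¬ (2:ℤ) ∣ (a - b)) :
    (-1 : ℂ) ^ a = -((-1 : ℂ) ^ b) := by
  have : a = b + (a - b) := by ring
  rw [this, zpow_add₀ (by norm_num : (-1:ℂ) ≠ 0), neg_one_zpow_odd h]
  ring

lemma sum_flip {G : Type*} [AddCommGroup G] [Fintype G] (f : G → ℂ) (e : G)
    (h : ∀ g, f (g + e) = - f g) : ∑ g, f g = 0 := by
  have h2 : ∑ g, f (g + e) = ∑ g, f g :=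
    Fintype.sum_equiv (Equiv.addRight e) _ _ (fun g => rfl)
  have h3 : ∑ g, f (g + e) = - ∑ g, f g := by
    simp_rw [h]; exact Finset.sum_neg_distrib (f := f)
  have h4 : (∑ g, f g) + (∑ g, f g) = 0 := by
    nth_rewrite 2 [← h2]
    rw [h3]; ring
  exact add_self_eq_zero.mp h4


lemma zmod2_ne_zero (z : ZMod 2) (h : z ≠ 0) : z = 1 := by revert z h; decide

lemma val_add_int (a b : ZMod 2) :
    (((a + b).val : ℤ)) = (a.val : ℤ) + (b.val : ℤ) - 2 * ((a.val : ℤ) * (b.val : ℤ)) := by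
  revert a b; decide

lemma dvd_val_sub_iff (a b : ZMod 2) : ((2:ℤ) ∣ ((b.val : ℤ) - (a.val : ℤ))) ↔ a = b := by
  revert a b; decide

lemma odd_val_succ (a : ZMod 2) : ¬ ((2:ℤ) ∣ (((a + 1).val : ℤ) - (a.val : ℤ))) := by
  revert a; decide

lemma cast_val_sub (a b : ZMod 2) : (((a.val : ℤ) - (b.val : ℤ) : ℤ) : ZMod 2) = a + b := by
  revert a b; decide

lemma cast_val (a : ZMod 2) : (((a.val : ℤ) : ℤ) : ZMod 2) = a := by revert a; decide

/-- Character sum over `(ZMod 2)^n` vanishes if some coefficient is odd. -/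
lemma char_sum_zero {n : ℕ} (c : Fin n → ℤ) (j₀ : Fin n) (h : ¬ (2:ℤ) ∣ c j₀) :
    ∑ ℓ : V n, ((-1 : ℂ) ^ (∑ j, c j * ((ℓ j).val : ℤ))) = 0 := by
  apply sum_flip _ (Pi.single j₀ 1)
  intro g
  set e : V n := Pi.single j₀ 1 with he
  have happ : ∀ j, (g + e) j = g j + e j := fun j => rfl
  have hdiff : (∑ j, c j * (((g + e) j).val : ℤ)) - (∑ j, c j * ((g j).val : ℤ))
      = c j₀ * (((g j₀ + 1).val : ℤ) - ((g j₀).val : ℤ)) := by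
    rw [← Finset.sum_sub_distrib]
    rw [Finset.sum_eq_single j₀]
    · rw [happ, he]; simp only [Pi.single_eq_same]; ring
    · intro b _ hb
      rw [happ, he]; simp [Pi.single_eq_of_ne hb]
    · simp
  have hodd : ¬ (2:ℤ) ∣ ((∑ j, c j * (((g + e) j).val : ℤ)) - ∑ j, c j * ((g j).val : ℤ)) := by
    rw [hdiff]
    intro hdvd
    rcases Int.prime_two.dvd_mul.mp hdvd with h1 | h2
    · exact h h1
    · exact odd_val_succ (g j₀) h2
  exact neg_one_zpow_sub_odd hodd

lemma char_sum_full {n : ℕ} (c : Fin n → ℤ) (h : ∀ j, (2:ℤ) ∣ c j) :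
    ∑ ℓ : V n, ((-1 : ℂ) ^ (∑ j, c j * ((ℓ j).val : ℤ))) = (2:ℂ) ^ n := by
  have : ∀ ℓ : V n, ((-1 : ℂ) ^ (∑ j, c j * ((ℓ j).val : ℤ))) = 1 := by
    intro ℓ
    exact neg_one_zpow_even (Finset.dvd_sum fun j _ => (h j).mul_right _)
  simp_rw [this]
  simp [Finset.card_univ]

noncomputable def N2 {ι : Type*} [Fintype ι] (u : ι → ℂ) : ℝ := ∑ y, ‖u y‖ ^ 2

lemma N2_nonneg {ι : Type*} [Fintype ι] (u : ι → ℂ) : 0 ≤ N2 u :=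
  Finset.sum_nonneg fun y _ => by positivity

lemma herm_self {ι : Type*} [Fintype ι] (u : ι → ℂ) : herm u u = ((N2 u : ℝ) : ℂ) := by
  unfold herm N2
  simp only [Complex.mul_conj, ← Complex.sq_norm]
  norm_cast

lemma herm_cs {ι : Type*} [Fintype ι] (u v : ι → ℂ) :
    ‖herm u v‖ ^ 2 ≤ N2 u * N2 v := by
  have h1 : ‖herm u v‖ ≤ ∑ y, ‖u y‖ * ‖v y‖ := by
    refine (norm_sum_le _ _).trans_eq ?_
    refine Finset.sum_congr rfl fun y _ => ?_
    rw [norm_mul, Complex.norm_conj]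
  calc ‖herm u v‖ ^ 2 ≤ (∑ y, ‖u y‖ * ‖v y‖) ^ 2 := by
        apply pow_le_pow_left₀ (norm_nonneg _) h1
    _ ≤ N2 u * N2 v := Finset.sum_mul_sq_le_sq_mul_sq _ _ _


def qq {n : ℕ} (Q : Matrix (Fin n) (Fin n) (ZMod 2)) (y : V n) : ℤ :=
  ∑ j, ∑ k, ((y j).val : ℤ) * ((Q j k).val : ℤ) * ((y k).val : ℤ)

def ll {n : ℕ} (ℓ : V n) (y : V n) : ℤ := ∑ j, ((ℓ j).val : ℤ) * ((y j).val : ℤ)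

def expo {n : ℕ} (Q : Matrix (Fin n) (Fin n) (ZMod 2)) (ℓ : V n) (y : V n) : ℤ :=
  qq Q y + 2 * ll ℓ y

lemma rmPhi_eq {n : ℕ} (Q : Matrix (Fin n) (Fin n) (ZMod 2)) (ℓ : V n) (y : V n) :
    rmPhi n Q ℓ 0 y = ((1 / Real.sqrt (2 ^ n) : ℝ) : ℂ) * zI (expo Q ℓ y) := by
  unfold rmPhi zI expo qq ll
  norm_num

lemma card_V (n : ℕ) : Fintype.card (V n) = 2 ^ n := by
  rw [Fintype.card_fun]
  simp

lemma coef_sq (n : ℕ) :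
    ((1 / Real.sqrt (2 ^ n) : ℝ) : ℂ) * ((1 / Real.sqrt (2 ^ n) : ℝ) : ℂ)
      = ((1 / (2 ^ n : ℝ) : ℝ) : ℂ) := by
  have hs : (Real.sqrt (2 ^ n)) * Real.sqrt (2 ^ n) = (2:ℝ) ^ n :=
    Real.mul_self_sqrt (by positivity)
  have h : (1 / Real.sqrt (2 ^ n) : ℝ) * (1 / Real.sqrt (2 ^ n)) = 1 / (2 ^ n : ℝ) := by
    rw [div_mul_div_comm, hs]; norm_num
  rw [← Complex.ofReal_mul, h]

lemma herm_phi {n : ℕ} (Q Q' : Matrix (Fin n) (Fin n) (ZMod 2)) (ℓ ℓ' : V n) :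
    herm (rmPhi n Q ℓ 0) (rmPhi n Q' ℓ' 0)
      = ((1 / (2 ^ n : ℝ) : ℝ) : ℂ) * ∑ y : V n, zI (expo Q ℓ y - expo Q' ℓ' y) := by
  unfold herm
  rw [Finset.mul_sum]
  refine Finset.sum_congr rfl fun y _ => ?_
  rw [rmPhi_eq, rmPhi_eq, _root_.map_mul, zI_conj, Complex.conj_ofReal]
  rw [sub_eq_add_neg, zI_add, ← coef_sq n]
  ring

lemma herm_phi_self {n : ℕ} (Q : Matrix (Fin n) (Fin n) (ZMod 2)) (ℓ : V n) :
    herm (rmPhi n Q ℓ 0) (rmPhi n Q ℓ 0) = 1 := by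
  rw [herm_phi]
  simp only [sub_self, zI_zero]
  rw [Finset.sum_const, Finset.card_univ, card_V]
  push_cast
  rw [one_div]
  field_simp
  simp

lemma N2_phi {n : ℕ} (Q : Matrix (Fin n) (Fin n) (ZMod 2)) (ℓ : V n) :
    N2 (rmPhi n Q ℓ 0) = 1 := by
  have h := herm_self (rmPhi n Q ℓ 0)
  rw [herm_phi_self] at h
  exact_mod_cast h.symm

lemma herm_phi_same {n : ℕ} (Q : Matrix (Fin n) (Fin n) (ZMod 2)) (ℓ ℓ' : V n)
    (hne : ℓ ≠ ℓ') : herm (rmPhi n Q ℓ 0) (rmPhi n Q ℓ' 0) = 0 := by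
  rw [herm_phi]
  obtain ⟨j₀, hj₀⟩ : ∃ j, ℓ j ≠ ℓ' j := by
    by_contra hc; push_neg at hc; exact hne (funext hc)
  have hexp : ∀ y : V n, expo Q ℓ y - expo Q ℓ' y
      = 2 * ∑ j, ((((ℓ j).val : ℤ) - ((ℓ' j).val : ℤ))) * ((y j).val : ℤ) := by
    intro y
    unfold expo ll
    have h2 : ∑ j, ((((ℓ j).val : ℤ) - ((ℓ' j).val : ℤ))) * ((y j).val : ℤ)
        = (∑ j, ((ℓ j).val : ℤ) * ((y j).val : ℤ))
          - ∑ j, ((ℓ' j).val : ℤ) * ((y j).val : ℤ) := by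
      rw [← Finset.sum_sub_distrib]
      exact Finset.sum_congr rfl fun j _ => by ring
    rw [h2]; ring
  simp_rw [hexp, zI_two]
  rw [char_sum_zero _ j₀ ?hodd, mul_zero]
  case hodd =>
    intro hdvd
    exact hj₀ ((dvd_val_sub_iff (ℓ' j₀) (ℓ j₀)).mp hdvd).symm

/-- Fixed `Q`: the codewords form an orthonormal family; summed inner products. -/
lemma inner_phi {n : ℕ} (Q : Matrix (Fin n) (Fin n) (ZMod 2)) (y z : V n) :
    ∑ ℓ : V n, (starRingEnd ℂ) (rmPhi n Q ℓ 0 y) * rmPhi n Q ℓ 0 z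
      = if y = z then 1 else 0 := by
  have hterm : ∀ ℓ : V n, (starRingEnd ℂ) (rmPhi n Q ℓ 0 y) * rmPhi n Q ℓ 0 z
      = ((1 / (2 ^ n : ℝ) : ℝ) : ℂ) * (zI (qq Q z - qq Q y)
          * (-1 : ℂ) ^ (∑ j, ((((z j).val : ℤ) - ((y j).val : ℤ))) * ((ℓ j).val : ℤ))) := by
    intro ℓ
    rw [rmPhi_eq, rmPhi_eq, _root_.map_mul, zI_conj, Complex.conj_ofReal]
    have hsplit : -(expo Q ℓ y) + expo Q ℓ z = (qq Q z - qq Q y)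
        + 2 * ∑ j, ((((z j).val : ℤ) - ((y j).val : ℤ))) * ((ℓ j).val : ℤ) := by
      unfold expo ll
      have h2 : ∑ j, ((((z j).val : ℤ) - ((y j).val : ℤ))) * ((ℓ j).val : ℤ)
          = (∑ j, ((ℓ j).val : ℤ) * ((z j).val : ℤ))
            - ∑ j, ((ℓ j).val : ℤ) * ((y j).val : ℤ) := by
        rw [← Finset.sum_sub_distrib]
        exact Finset.sum_congr rfl fun j _ => by ring
      rw [h2]; ring
    calc ((1 / Real.sqrt (2 ^ n) : ℝ) : ℂ) * zI (-(expo Q ℓ y))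
          * (((1 / Real.sqrt (2 ^ n) : ℝ) : ℂ) * zI (expo Q ℓ z))
        = (((1 / Real.sqrt (2 ^ n) : ℝ) : ℂ) * ((1 / Real.sqrt (2 ^ n) : ℝ) : ℂ))
            * zI (-(expo Q ℓ y) + expo Q ℓ z) := by rw [zI_add]; ring
      _ = _ := by
          rw [coef_sq n, hsplit, zI_add, zI_two]
  simp_rw [hterm]
  rw [← Finset.mul_sum, ← Finset.mul_sum]
  by_cases hyz : y = z
  · subst hyz
    simp only [sub_self, zI_zero, one_mul, zero_mul, Finset.sum_const_zero, zpow_zero,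
      if_true]
    rw [Finset.sum_const, Finset.card_univ, card_V]
    simp only [nsmul_eq_mul, mul_one, if_pos rfl]
    push_cast
    rw [one_div]
    field_simp
  · obtain ⟨j₀, hj₀⟩ : ∃ j, y j ≠ z j := by
      by_contra hc; push_neg at hc; exact hyz (funext hc)
    rw [char_sum_zero _ j₀ (fun hdvd => hj₀ ((dvd_val_sub_iff (y j₀) (z j₀)).mp hdvd))]
    simp [hyz]

lemma parseval {n : ℕ} (Q : Matrix (Fin n) (Fin n) (ZMod 2)) (s : V n → ℂ) :
    ∑ ℓ : V n, ‖herm s (rmPhi n Q ℓ 0)‖ ^ 2 = N2 s := by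
  apply Complex.ofReal_injective
  push_cast
  have h1 : ∀ ℓ : V n, ((‖herm s (rmPhi n Q ℓ 0)‖ : ℂ)) ^ 2
      = herm s (rmPhi n Q ℓ 0) * (starRingEnd ℂ) (herm s (rmPhi n Q ℓ 0)) := by
    intro ℓ
    rw [Complex.mul_conj]
    norm_cast
    rw [Complex.sq_norm]
  simp_rw [h1]
  have h2 : ∀ ℓ : V n, herm s (rmPhi n Q ℓ 0) * (starRingEnd ℂ) (herm s (rmPhi n Q ℓ 0))
      = ∑ y : V n, ∑ z : V n, (s y * (starRingEnd ℂ) (s z))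
          * ((starRingEnd ℂ) (rmPhi n Q ℓ 0 y) * rmPhi n Q ℓ 0 z) := by
    intro ℓ
    unfold herm
    rw [map_sum, Finset.sum_mul_sum]
    refine Finset.sum_congr rfl fun y _ => Finset.sum_congr rfl fun z _ => ?_
    rw [_root_.map_mul, Complex.conj_conj]
    ring
  simp_rw [h2]
  rw [Finset.sum_comm]
  have h3 : ∀ y : V n, ∑ ℓ : V n, ∑ z : V n, (s y * (starRingEnd ℂ) (s z))
      * ((starRingEnd ℂ) (rmPhi n Q ℓ 0 y) * rmPhi n Q ℓ 0 z)
      = s y * (starRingEnd ℂ) (s y) := by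
    intro y
    rw [Finset.sum_comm]
    have h4 : ∀ z : V n, ∑ ℓ : V n, (s y * (starRingEnd ℂ) (s z))
        * ((starRingEnd ℂ) (rmPhi n Q ℓ 0 y) * rmPhi n Q ℓ 0 z)
        = (s y * (starRingEnd ℂ) (s z)) * (if y = z then 1 else 0) := by
      intro z
      rw [← Finset.mul_sum, inner_phi]
    simp_rw [h4]
    simp only [mul_ite, mul_one, mul_zero]
    rw [Finset.sum_ite_eq univ y (fun z => s y * (starRingEnd ℂ) (s z))]
    simp
  simp_rw [h3]
  unfold N2
  push_cast
  refine Finset.sum_congr rfl fun y _ => ?_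
  rw [Complex.mul_conj]
  norm_cast
  rw [Complex.sq_norm]


lemma swapMsum {n : ℕ} (M : Fin n → Fin n → ℤ) (hM : ∀ j k, M j k = M k j)
    (f : Fin n → Fin n → ℤ) :
    ∑ j, ∑ k, M j k * f j k = ∑ j, ∑ k, M j k * f k j := by
  rw [Finset.sum_comm]
  refine Finset.sum_congr rfl fun a _ => Finset.sum_congr rfl fun b _ => ?_
  rw [hM b a]

lemma key_id {n : ℕ} (M : Fin n → Fin n → ℤ) (hM : ∀ j k, M j k = M k j)
    (L : Fin n → ℤ) (xv yv wv : Fin n → ℤ)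
    (hw : ∀ j, wv j = yv j + xv j - 2 * (xv j * yv j)) :
    ((∑ j, ∑ k, M j k * (yv j * yv k)) + 2 * ∑ j, L j * yv j)
      - ((∑ j, ∑ k, M j k * (wv j * wv k)) + 2 * ∑ j, L j * wv j)
    = (-(∑ j, ∑ k, M j k * (xv j * xv k)) - 2 * ∑ j, L j * xv j)
      + 2 * (∑ j, ∑ k, M j k * (-(xv j * yv k)))
      + 4 * ((∑ j, L j * (xv j * yv j))
        + ∑ j, ∑ k, M j k * (xv j * yv j * yv k + xv j * yv j * xv k
            - xv j * xv k * yv j * yv k)) := by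
  have swap' : ∀ f g : Fin n → Fin n → ℤ, (∀ j k, f k j = g j k) →
      (∑ j, ∑ k, M j k * f j k) = ∑ j, ∑ k, M j k * g j k := fun f g hfg =>
    (swapMsum M hM f).trans
      (Finset.sum_congr rfl fun j _ => Finset.sum_congr rfl fun k _ => by rw [hfg])
  have hww : ∑ j, ∑ k, M j k * (wv j * wv k)
      = (∑ j, ∑ k, M j k * (yv j * yv k)) + (∑ j, ∑ k, M j k * (yv j * xv k))
        - 2 * (∑ j, ∑ k, M j k * (yv j * (xv k * yv k)))
        + (∑ j, ∑ k, M j k * (xv j * yv k)) + (∑ j, ∑ k, M j k * (xv j * xv k))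
        - 2 * (∑ j, ∑ k, M j k * (xv j * (xv k * yv k)))
        - 2 * (∑ j, ∑ k, M j k * (xv j * yv j * yv k))
        - 2 * (∑ j, ∑ k, M j k * (xv j * yv j * xv k))
        + 4 * (∑ j, ∑ k, M j k * (xv j * xv k * yv j * yv k)) := by
    simp only [Finset.mul_sum, ← Finset.sum_add_distrib, ← Finset.sum_sub_distrib]
    refine Finset.sum_congr rfl fun j _ => Finset.sum_congr rfl fun k _ => ?_
    rw [hw j, hw k]; ring
  have hLw : ∑ j, L j * wv j
      = (∑ j, L j * yv j) + (∑ j, L j * xv j) - 2 * ∑ j, L j * (xv j * yv j) := by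
    simp only [Finset.mul_sum, ← Finset.sum_add_distrib, ← Finset.sum_sub_distrib]
    refine Finset.sum_congr rfl fun j _ => ?_
    rw [hw j]; ring
  have hT : ∑ j, ∑ k, M j k * (xv j * yv j * yv k + xv j * yv j * xv k
        - xv j * xv k * yv j * yv k)
      = (∑ j, ∑ k, M j k * (xv j * yv j * yv k))
        + (∑ j, ∑ k, M j k * (xv j * yv j * xv k))
        - (∑ j, ∑ k, M j k * (xv j * xv k * yv j * yv k)) := by
    simp only [Finset.mul_sum, ← Finset.sum_add_distrib, ← Finset.sum_sub_distrib]
    refine Finset.sum_congr rfl fun j _ => Finset.sum_congr rfl fun k _ => ?_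
    ring
  have hB : ∑ j, ∑ k, M j k * (-(xv j * yv k)) = -∑ j, ∑ k, M j k * (xv j * yv k) := by
    simp only [← Finset.sum_neg_distrib]
    refine Finset.sum_congr rfl fun j _ => Finset.sum_congr rfl fun k _ => ?_
    ring
  have sw1 : ∑ j, ∑ k, M j k * (yv j * xv k) = ∑ j, ∑ k, M j k * (xv j * yv k) :=
    swap' _ _ (fun j k => by ring)
  have sw2 : ∑ j, ∑ k, M j k * (yv j * (xv k * yv k))
      = ∑ j, ∑ k, M j k * (xv j * yv j * yv k) := swap' _ _ (fun j k => by ring)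
  have sw3 : ∑ j, ∑ k, M j k * (xv j * (xv k * yv k))
      = ∑ j, ∑ k, M j k * (xv j * yv j * xv k) := swap' _ _ (fun j k => by ring)
  linarith [hww, hLw, hT, hB, sw1, sw2, sw3]


def Kset (n : ℕ) (Δ : Matrix (Fin n) (Fin n) (ZMod 2)) : Finset (V n) :=
  Finset.univ.filter (fun x => Matrix.vecMul x Δ = 0)

lemma gauss {n : ℕ} (Q Q' : Matrix (Fin n) (Fin n) (ZMod 2))
    (hQ : ∀ j k, Q j k = Q k j) (hQ' : ∀ j k, Q' j k = Q' k j) (ℓ ℓ' : V n) :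
    ‖herm (rmPhi n Q ℓ 0) (rmPhi n Q' ℓ' 0)‖ ^ 2
      ≤ ((Kset n (Q + Q')).card : ℝ) / 2 ^ n := by
  classical
  set M : Fin n → Fin n → ℤ := fun j k => ((Q j k).val : ℤ) - ((Q' j k).val : ℤ) with hMdef
  have hMsym : ∀ j k, M j k = M k j := by
    intro j k; simp only [hMdef]; rw [hQ j k, hQ' j k]
  set L : Fin n → ℤ := fun j => ((ℓ j).val : ℤ) - ((ℓ' j).val : ℤ) with hLdef
  set E : V n → ℤ := fun y => expo Q ℓ y - expo Q' ℓ' y with hEdef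
  have hEexp : ∀ y : V n, E y
      = (∑ j, ∑ k, M j k * (((y j).val : ℤ) * ((y k).val : ℤ)))
        + 2 * ∑ j, L j * ((y j).val : ℤ) := by
    intro y
    simp only [hEdef, hMdef, hLdef]
    unfold expo qq ll
    have h1 : ∑ j, ∑ k, (((Q j k).val : ℤ) - ((Q' j k).val : ℤ)) * (((y j).val : ℤ) * ((y k).val : ℤ))
        = (∑ j, ∑ k, ((y j).val : ℤ) * ((Q j k).val : ℤ) * ((y k).val : ℤ))
          - ∑ j, ∑ k, ((y j).val : ℤ) * ((Q' j k).val : ℤ) * ((y k).val : ℤ) := by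
      simp only [← Finset.sum_sub_distrib]
      exact Finset.sum_congr rfl fun j _ => Finset.sum_congr rfl fun k _ => by ring
    have h2 : ∑ j, ((((ℓ j).val : ℤ) - ((ℓ' j).val : ℤ))) * ((y j).val : ℤ)
        = (∑ j, ((ℓ j).val : ℤ) * ((y j).val : ℤ)) - ∑ j, ((ℓ' j).val : ℤ) * ((y j).val : ℤ) := by
      simp only [← Finset.sum_sub_distrib]
      exact Finset.sum_congr rfl fun j _ => by ring
    rw [h1, h2]; ring
  set Dd : V n → Fin n → ℤ := fun x k => ∑ j, ((x j).val : ℤ) * M j k with hDdef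
  set Cx : V n → ℤ := fun x =>
    -(∑ j, ∑ k, M j k * (((x j).val : ℤ) * ((x k).val : ℤ))) - 2 * ∑ j, L j * ((x j).val : ℤ)
    with hCdef
  -- pointwise key identity
  have hpoint : ∀ x y : V n, zI (E y - E (y + x))
      = zI (Cx x) * ((-1 : ℂ) ^ (∑ k, (-(Dd x k)) * ((y k).val : ℤ))) := by
    intro x y
    have hw : ∀ j, (((y + x) j).val : ℤ)
        = ((y j).val : ℤ) + ((x j).val : ℤ) - 2 * (((x j).val : ℤ) * ((y j).val : ℤ)) := by
      intro j
      have : (y + x) j = y j + x j := rfl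
      rw [this, val_add_int]; ring
    have hk := key_id M hMsym L (fun j => ((x j).val : ℤ)) (fun j => ((y j).val : ℤ))
      (fun j => (((y + x) j).val : ℤ)) hw
    have hBB : ∑ j, ∑ k, M j k * (-(((x j).val : ℤ) * ((y k).val : ℤ)))
        = ∑ k, (-(Dd x k)) * ((y k).val : ℤ) := by
      rw [Finset.sum_comm]
      refine Finset.sum_congr rfl fun k _ => ?_
      simp only [hDdef]
      rw [neg_mul, Finset.sum_mul, ← Finset.sum_neg_distrib]
      exact Finset.sum_congr rfl fun j _ => by ring
    have hEy : E y - E (y + x) = Cx x + 2 * (∑ k, (-(Dd x k)) * ((y k).val : ℤ))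
        + 4 * ((∑ j, L j * (((x j).val : ℤ) * ((y j).val : ℤ)))
          + ∑ j, ∑ k, M j k * (((x j).val : ℤ) * ((y j).val : ℤ) * ((y k).val : ℤ)
            + ((x j).val : ℤ) * ((y j).val : ℤ) * ((x k).val : ℤ)
            - ((x j).val : ℤ) * ((x k).val : ℤ) * ((y j).val : ℤ) * ((y k).val : ℤ))) := by
      rw [hEexp y, hEexp (y + x), hCdef, ← hBB]
      beta_reduce
      linarith [hk]
    rw [hEy, zI_add, zI_add, zI_four, mul_one, zI_two]
  -- the Gauss sum bound
  set S := ∑ y : V n, zI (E y) with hSdef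
  have hherm : herm (rmPhi n Q ℓ 0) (rmPhi n Q' ℓ' 0) = ((1 / (2 ^ n : ℝ) : ℝ) : ℂ) * S := by
    rw [herm_phi]
  have habs2 : ‖S‖ ^ 2 ≤ ((Kset n (Q + Q')).card : ℝ) * 2 ^ n := by
    have h1 : (‖S‖) ^ 2 = ‖S * (starRingEnd ℂ) S‖ := by
      rw [norm_mul, Complex.norm_conj, sq]
    have h2 : S * (starRingEnd ℂ) S = ∑ x : V n, ∑ y : V n, zI (E y - E (y + x)) := by
      rw [hSdef, map_sum, Finset.sum_mul_sum]
      have hz : ∀ y z : V n, zI (E y) * (starRingEnd ℂ) (zI (E z)) = zI (E y - E z) := by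
        intro y z
        rw [zI_conj, ← zI_add, sub_eq_add_neg]
      simp_rw [hz]
      have hre : ∀ y : V n, ∑ z : V n, zI (E y - E z) = ∑ x : V n, zI (E y - E (y + x)) :=
        fun y => (Fintype.sum_equiv (Equiv.addLeft y) _ _ (fun x => rfl)).symm
      simp_rw [hre]
      rw [Finset.sum_comm]
    have hnat : ∀ a : ZMod 2, ((a.val : ZMod 2)) = a := by decide
    have h3 : ∀ x : V n, x ∉ Kset n (Q + Q') → ∑ y : V n, zI (E y - E (y + x)) = 0 := by
      intro x hx
      simp_rw [hpoint x]
      rw [← Finset.mul_sum]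
      have hxk : ∃ k, Matrix.vecMul x (Q + Q') k ≠ 0 := by
        by_contra hc; push_neg at hc
        exact hx (Finset.mem_filter.mpr ⟨Finset.mem_univ _, funext hc⟩)
      obtain ⟨k₀, hk₀⟩ := hxk
      have hcast : ((Dd x k₀ : ℤ) : ZMod 2) = Matrix.vecMul x (Q + Q') k₀ := by
        simp only [hDdef, hMdef]
        push_cast
        simp only [hnat]
        rw [Matrix.vecMul, dotProduct]
        refine Finset.sum_congr rfl fun j _ => ?_
        rw [Matrix.add_apply, CharTwo.sub_eq_add]
      have hodd : ¬ (2:ℤ) ∣ (-(Dd x k₀)) := by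
        rw [dvd_neg]
        intro hdvd
        exact hk₀ (by rw [← hcast]; exact (ZMod.intCast_zmod_eq_zero_iff_dvd _ 2).mpr hdvd)
      rw [char_sum_zero _ k₀ hodd, mul_zero]
    calc ‖S‖ ^ 2 = ‖∑ x : V n, ∑ y : V n, zI (E y - E (y + x))‖ := by
          rw [h1, h2]
      _ ≤ ∑ x : V n, ‖∑ y : V n, zI (E y - E (y + x))‖ := norm_sum_le _ _
      _ ≤ ∑ x : V n, (if x ∈ Kset n (Q + Q') then (2:ℝ) ^ n else 0) := by
          refine Finset.sum_le_sum fun x _ => ?_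
          by_cases hx : x ∈ Kset n (Q + Q')
          · rw [if_pos hx]
            refine (norm_sum_le _ _).trans ?_
            have hone : ∀ y : V n, ‖zI (E y - E (y + x))‖ = 1 := fun y => zI_abs _
            simp_rw [hone]
            rw [Finset.sum_const, Finset.card_univ, card_V, nsmul_eq_mul, mul_one]
            push_cast
            exact le_refl _
          · rw [if_neg hx, h3 x hx, norm_zero]
      _ = ((Kset n (Q + Q')).card : ℝ) * 2 ^ n := by
          rw [Finset.sum_ite_mem, Finset.univ_inter, Finset.sum_const, nsmul_eq_mul]
  rw [hherm, norm_mul, mul_pow, Complex.norm_real, Real.norm_eq_abs]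
  have habs1 : |(1 / (2 ^ n : ℝ))| = 1 / 2 ^ n := abs_of_pos (by positivity)
  rw [habs1]
  calc (1 / (2 ^ n : ℝ)) ^ 2 * ‖S‖ ^ 2
      ≤ (1 / (2 ^ n : ℝ)) ^ 2 * (((Kset n (Q + Q')).card : ℝ) * 2 ^ n) :=
        mul_le_mul_of_nonneg_left habs2 (by positivity)
    _ = ((Kset n (Q + Q')).card : ℝ) / 2 ^ n := by
        field_simp


lemma seq_unique {n R : ℕ} (hR : 1 ≤ R) (hRn : R ≤ n)
    (a b c c' : ℕ → ZMod 2)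
    (hc0 : ∃ i, i < R ∧ c i ≠ 0)
    (hcs : ∀ i, R ≤ i → c i = 0)
    (hc'0 : ∃ i, c' i ≠ 0)
    (hc's : ∀ i, i < n - R → c' i = 0)
    (hc's2 : ∀ i, n ≤ i → c' i = 0)
    (hra : ∀ j, j < n → ∑ i ∈ Finset.range n, c i * a (i + j) = 0)
    (hrb : ∀ j, j < n → ∑ i ∈ Finset.range n, c i * b (i + j) = 0)
    (hr'a : ∀ j, j < n → ∑ i ∈ Finset.range n, c' i * a (i + j) = 0)
    (hr'b : ∀ j, j < n → ∑ i ∈ Finset.range n, c' i * b (i + j) = 0)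
    (hinit : ∀ i, i < R → a i = b i)
    (htop : ∀ i, 2 * n - 1 - R ≤ i → i < 2 * n - 1 → a i = b i) :
    ∀ d, d < 2 * n - 1 → a d = b d := by
  classical
  have hn1 : 1 ≤ n := le_trans hR hRn
  obtain ⟨i₁, hi₁R, hi₁⟩ := hc0
  set I := Nat.findGreatest (fun i => c i ≠ 0) R with hIdef
  have hI : c I ≠ 0 := by
    rw [hIdef]; exact Nat.findGreatest_spec (P := fun i => c i ≠ 0) (le_of_lt hi₁R) hi₁
  have hIlt : I < R := by
    by_contra h; push_neg at h; exact hI (hcs I h)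
  have hIup : ∀ i, I < i → c i = 0 := by
    intro i hi
    by_cases h2 : i ≤ R
    · refine not_not.mp (Nat.findGreatest_is_greatest (P := fun i => c i ≠ 0) ?_ h2)
      rwa [← hIdef]
    · exact hcs i (by omega)
  have solveA : ∀ (x : ℕ → ZMod 2),
      (∀ j, j < n → ∑ i ∈ Finset.range n, c i * x (i + j) = 0) →
      ∀ j, j < n → x (I + j) = ∑ i ∈ Finset.range I, c i * x (i + j) := by
    intro x hrx j hj
    have h0 := hrx j hj
    have hmem : I ∈ Finset.range n := Finset.mem_range.mpr (by omega)
    have hsplit : ∑ i ∈ Finset.range n, c i * x (i + j)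
        = c I * x (I + j) + ∑ i ∈ Finset.range I, c i * x (i + j) := by
      rw [← Finset.add_sum_erase _ _ hmem]
      congr 1
      refine (Finset.sum_subset ?_ ?_).symm
      · intro i hi
        rw [Finset.mem_range] at hi
        exact Finset.mem_erase.mpr ⟨by omega, Finset.mem_range.mpr (by omega)⟩
      · intro i hi hni
        rw [Finset.mem_erase, Finset.mem_range] at hi
        rw [Finset.mem_range] at hni
        rw [hIup i (by omega), zero_mul]
    rw [hsplit, zmod2_ne_zero _ hI, one_mul] at h0
    have h1 : x (I + j) = - ∑ i ∈ Finset.range I, c i * x (i + j) :=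
      eq_neg_of_add_eq_zero_left h0
    rwa [CharTwo.neg_eq] at h1
  have part1 : ∀ d, d ≤ I + (n - 1) → a d = b d := by
    intro d
    induction d using Nat.strong_induction_on with
    | _ d ih =>
      intro hd
      by_cases hdI : d < I
      · exact hinit d (by omega)
      · push_neg at hdI
        have hdIj : d = I + (d - I) := by omega
        have hjn : d - I < n := by omega
        rw [hdIj, solveA a hra _ hjn, solveA b hrb _ hjn]
        refine Finset.sum_congr rfl fun i hi => ?_
        rw [Finset.mem_range] at hi
        rw [ih (i + (d - I)) (by omega) (by omega)]
  have hc'ex : ∃ i, c' i ≠ 0 := hc'0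
  set I' := Nat.find hc'ex with hI'def
  have hI' : c' I' ≠ 0 := Nat.find_spec hc'ex
  have hI'min : ∀ i, i < I' → c' i = 0 := fun i hi => not_not.mp (Nat.find_min hc'ex hi)
  have hI'lo : n - R ≤ I' := by
    by_contra h; push_neg at h; exact hI' (hc's I' h)
  have hI'n : I' < n := by
    by_contra h; push_neg at h; exact hI' (hc's2 I' (by omega))
  have solveB : ∀ (x : ℕ → ZMod 2),
      (∀ j, j < n → ∑ i ∈ Finset.range n, c' i * x (i + j) = 0) →
      ∀ j, j < n → x (I' + j) = ∑ i ∈ Finset.Ico (I' + 1) n, c' i * x (i + j) := by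
    intro x hrx j hj
    have h0 := hrx j hj
    have hsub : ∑ i ∈ Finset.range n, c' i * x (i + j)
        = ∑ i ∈ Finset.Ico I' n, c' i * x (i + j) := by
      refine (Finset.sum_subset ?_ ?_).symm
      · intro i hi
        rw [Finset.mem_Ico] at hi
        exact Finset.mem_range.mpr hi.2
      · intro i hi hni
        rw [Finset.mem_range] at hi
        rw [Finset.mem_Ico] at hni
        rw [hI'min i (by omega), zero_mul]
    rw [hsub, Finset.sum_eq_sum_Ico_succ_bot hI'n] at h0
    rw [zmod2_ne_zero _ hI', one_mul] at h0
    have h1 : x (I' + j) = - ∑ i ∈ Finset.Ico (I' + 1) n, c' i * x (i + j) :=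
      eq_neg_of_add_eq_zero_left h0
    rwa [CharTwo.neg_eq] at h1
  have part2 : ∀ u d, 2 * n - 1 ≤ d + u + 1 → I' ≤ d → d < 2 * n - 1 → a d = b d := by
    intro u
    induction u using Nat.strong_induction_on with
    | _ u ih =>
      intro d hud hI'd hd
      by_cases hdtop : 2 * n - 1 - R ≤ d
      · exact htop d hdtop hd
      · push_neg at hdtop
        have hdj : d = I' + (d - I') := by omega
        have hjn : d - I' < n := by omega
        rw [hdj, solveB a hr'a _ hjn, solveB b hr'b _ hjn]
        refine Finset.sum_congr rfl fun i hi => ?_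
        rw [Finset.mem_Ico] at hi
        have he : i + (d - I') < 2 * n - 1 := by omega
        rw [ih (2 * n - 2 - (i + (d - I'))) (by omega) (i + (d - I')) (by omega) (by omega) he]
  intro d hd
  by_cases hcase : d ≤ I + (n - 1)
  · exact part1 d hcase
  · push_neg at hcase
    exact part2 (2 * n - 2 - d) d (by omega) (by omega) hd


def IsHankel {n : ℕ} (Δ : Matrix (Fin n) (Fin n) (ZMod 2)) : Prop :=
  ∀ j k j' k' : Fin n, (j : ℕ) + (k : ℕ) = (j' : ℕ) + (k' : ℕ) → Δ j k = Δ j' k'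

def seqD {n : ℕ} (Δ : Matrix (Fin n) (Fin n) (ZMod 2)) (d : ℕ) : ZMod 2 :=
  if h : d < n then Δ ⟨d, h⟩ ⟨0, by omega⟩
  else if h2 : 0 < n ∧ d - (n - 1) < n then Δ ⟨n - 1, by omega⟩ ⟨d - (n - 1), by omega⟩
  else 0

lemma seqD_apply {n : ℕ} (Δ : Matrix (Fin n) (Fin n) (ZMod 2)) (hΔ : IsHankel Δ)
    (j k : Fin n) : Δ j k = seqD Δ ((j : ℕ) + (k : ℕ)) := by
  unfold seqD
  have hj := j.isLt
  have hk := k.isLt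
  by_cases h : (j : ℕ) + (k : ℕ) < n
  · rw [dif_pos h]
    exact hΔ j k ⟨_, h⟩ ⟨0, by omega⟩ (by simp)
  · rw [dif_neg h, dif_pos ⟨by omega, by omega⟩]
    refine hΔ j k ⟨n - 1, by omega⟩ ⟨(j : ℕ) + (k : ℕ) - (n - 1), by omega⟩ ?_
    show (j : ℕ) + (k : ℕ) = (n - 1) + ((j : ℕ) + (k : ℕ) - (n - 1))
    omega

lemma ker_rec {n : ℕ} (Δ : Matrix (Fin n) (Fin n) (ZMod 2)) (hΔ : IsHankel Δ) (x : V n)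
    (hx : Matrix.vecMul x Δ = 0) (cnat : ℕ → ZMod 2)
    (hcnat : ∀ i : Fin n, cnat (i : ℕ) = x i) :
    ∀ j, j < n → ∑ i ∈ Finset.range n, cnat i * seqD Δ (i + j) = 0 := by
  intro j hj
  have h1 := congrFun hx ⟨j, hj⟩
  simp only [Matrix.vecMul, dotProduct, Pi.zero_apply] at h1
  have h2 : ∑ i ∈ Finset.range n, cnat i * seqD Δ (i + j)
      = ∑ i : Fin n, x i * Δ i ⟨j, hj⟩ := by
    rw [← Fin.sum_univ_eq_sum_range (fun i => cnat i * seqD Δ (i + j)) n]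
    refine Finset.sum_congr rfl fun i _ => ?_
    rw [hcnat i, ← seqD_apply Δ hΔ i ⟨j, hj⟩]
  rw [h2]
  exact h1

open scoped Classical in
lemma count_low {n R : ℕ} (hR : 1 ≤ R) :
    ((Finset.univ.filter (fun Δ : Matrix (Fin n) (Fin n) (ZMod 2) =>
        IsHankel Δ ∧ Δ ≠ 0 ∧ 2 ^ n < (Kset n Δ).card * 2 ^ R)).card) ≤ 2 ^ (4 * R) := by
  classical
  by_cases hn : n ≤ R
  · -- crude bound: all Hankel matrices
    calc ((Finset.univ.filter (fun Δ : Matrix (Fin n) (Fin n) (ZMod 2) =>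
          IsHankel Δ ∧ Δ ≠ 0 ∧ 2 ^ n < (Kset n Δ).card * 2 ^ R)).card)
        ≤ (Finset.univ : Finset (Fin (2 * n) → ZMod 2)).card := by
          apply Finset.card_le_card_of_injOn (fun Δ => (fun d : Fin (2 * n) => seqD Δ (d : ℕ)))
            (fun _ _ => Finset.mem_univ _)
          intro Δ₁ h₁ Δ₂ h₂ heq
          have hH₁ := ((Finset.mem_filter.mp h₁).2).1
          have hH₂ := ((Finset.mem_filter.mp h₂).2).1
          ext j k
          have hjk : (j : ℕ) + (k : ℕ) < 2 * n := by
            have := j.isLt; have := k.isLt; omega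
          have := congrFun heq ⟨(j : ℕ) + (k : ℕ), hjk⟩
          simp only at this
          rw [seqD_apply Δ₁ hH₁ j k, seqD_apply Δ₂ hH₂ j k]
          exact this
      _ ≤ 2 ^ (4 * R) := by
          rw [Finset.card_univ, Fintype.card_fun]
          simp only [ZMod.card, Fintype.card_fin]
          exact Nat.pow_le_pow_right (by norm_num) (by omega)
  · push_neg at hn
    have hRn : R ≤ n := le_of_lt hn
    -- existence of low-support kernel vectors
    have exC : ∀ Δ : Matrix (Fin n) (Fin n) (ZMod 2),
        2 ^ n < (Kset n Δ).card * 2 ^ R →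
        ∀ (G : (Fin R → ZMod 2) → V n), Function.Injective G →
        ∃ x : V n, x ≠ 0 ∧ (∃ c₁ c₂ : Fin R → ZMod 2, x = G c₁ + G c₂) ∧
          Matrix.vecMul x Δ = 0 := by
      intro Δ hKbig G hGinj
      set F : V n → V n := fun x => Matrix.vecMul x Δ with hF
      have hfib : ∀ v ∈ Finset.univ.image F,
          (Finset.univ.filter (fun x => F x = v)).card = (Kset n Δ).card := by
        intro v hv
        obtain ⟨x₀, -, hx₀⟩ := Finset.mem_image.mp hv
        have hx₀' : Matrix.vecMul x₀ Δ = v := hx₀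
        apply Finset.card_bij' (fun x _ => x + x₀) (fun y _ => y + x₀)
        · intro x hx
          rw [Finset.mem_filter] at hx
          rw [Kset, Finset.mem_filter]
          refine ⟨Finset.mem_univ _, ?_⟩
          show Matrix.vecMul (x + x₀) Δ = 0
          rw [Matrix.add_vecMul]
          have hxv : Matrix.vecMul x Δ = v := hx.2
          rw [hxv, hx₀']
          funext i
          exact CharTwo.add_self_eq_zero _
        · intro y hy
          rw [Kset, Finset.mem_filter] at hy
          rw [Finset.mem_filter]
          refine ⟨Finset.mem_univ _, ?_⟩
          show Matrix.vecMul (y + x₀) Δ = v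
          have hy2 : Matrix.vecMul y Δ = 0 := hy.2
          rw [Matrix.add_vecMul, hy2, hx₀']
          funext i
          simp
        · intro x _
          funext i
          simp [add_assoc, CharTwo.add_self_eq_zero]
        · intro y _
          funext i
          simp [add_assoc, CharTwo.add_self_eq_zero]
      have hcard : (Finset.univ.image F).card * (Kset n Δ).card = 2 ^ n := by
        have h1 : (Finset.univ : Finset (V n)).card
            = ∑ v ∈ Finset.univ.image F, (Finset.univ.filter (fun x => F x = v)).card :=
          Finset.card_eq_sum_card_fiberwise (fun x _ => Finset.mem_image_of_mem F (Finset.mem_univ x))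
        rw [Finset.card_univ, card_V] at h1
        rw [Finset.sum_congr rfl hfib, Finset.sum_const, smul_eq_mul] at h1
        omega
      have hK1 : 1 ≤ (Kset n Δ).card := by
        refine Finset.card_pos.mpr ⟨0, ?_⟩
        rw [Kset, Finset.mem_filter]
        exact ⟨Finset.mem_univ _, Matrix.zero_vecMul Δ⟩
      have himlt : (Finset.univ.image F).card < 2 ^ R := by
        by_contra h
        push_neg at h
        have h2 : (Kset n Δ).card * 2 ^ R ≤ (Kset n Δ).card * (Finset.univ.image F).card :=
          Nat.mul_le_mul_left _ h
        rw [Nat.mul_comm (Kset n Δ).card (Finset.univ.image F).card, hcard] at h2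
        omega
      have hGcard : Fintype.card (Fin R → ZMod 2) = 2 ^ R := by
        rw [Fintype.card_fun]; simp
      obtain ⟨c₁, -, c₂, -, hc12, hGeq⟩ :=
        Finset.exists_ne_map_eq_of_card_lt_of_maps_to
          (t := Finset.univ.image F)
          (by rw [Finset.card_univ, hGcard]; exact himlt)
          (fun (cR : Fin R → ZMod 2) _ => Finset.mem_image_of_mem F (Finset.mem_univ (G cR)))
      refine ⟨G c₁ + G c₂, ?_, ⟨c₁, c₂, rfl⟩, ?_⟩
      · intro h0
        apply hc12
        apply hGinj
        funext i
        have hi := congrFun h0 i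
        simp only [Pi.add_apply, Pi.zero_apply] at hi
        have h2 : G c₁ i = - G c₂ i := eq_neg_of_add_eq_zero_left hi
        rwa [CharTwo.neg_eq] at h2
      · show Matrix.vecMul (G c₁ + G c₂) Δ = 0
        rw [Matrix.add_vecMul]
        have : F (G c₁) = F (G c₂) := hGeq
        rw [show Matrix.vecMul (G c₁) Δ = F (G c₁) from rfl,
          show Matrix.vecMul (G c₂) Δ = F (G c₂) from rfl, this]
        funext i
        exact CharTwo.add_self_eq_zero _
    -- support patterns
    set G1 : (Fin R → ZMod 2) → V n :=
      fun cR => (fun i : Fin n => if h : (i : ℕ) < R then cR ⟨i, h⟩ else 0) with hG1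
    have hG1inj : Function.Injective G1 := by
      intro c₁ c₂ h
      funext iR
      have h2 := congrFun h ⟨(iR : ℕ), by omega⟩
      simp only [hG1] at h2
      rw [dif_pos iR.isLt, dif_pos iR.isLt] at h2
      simpa using h2
    set G2 : (Fin R → ZMod 2) → V n :=
      fun cR => (fun i : Fin n =>
        if h : n - R ≤ (i : ℕ) then cR ⟨(i : ℕ) - (n - R), by omega⟩ else 0) with hG2
    have hG2app : ∀ (c : Fin R → ZMod 2) (iR : Fin R),
        G2 c ⟨n - R + (iR : ℕ), by omega⟩ = c iR := by
      intro c iR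
      simp only [hG2]
      split
      · apply congrArg c
        apply Fin.ext
        show (n - R + (iR : ℕ)) - (n - R) = (iR : ℕ)
        omega
      · next h => exact absurd (by show n - R ≤ n - R + (iR : ℕ); omega) h
    have hG2inj : Function.Injective G2 := by
      intro c₁ c₂ h
      funext iR
      rw [← hG2app c₁ iR, ← hG2app c₂ iR, h]
    have hG1supp : ∀ (c : Fin R → ZMod 2) (i : Fin n), ¬((i : ℕ) < R) → G1 c i = 0 := by
      intro c i hi
      simp only [hG1]
      rw [dif_neg hi]
    have hG2supp : ∀ (c : Fin R → ZMod 2) (i : Fin n), (i : ℕ) < n - R → G2 c i = 0 := by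
      intro c i hi
      simp only [hG2]
      rw [dif_neg (by omega)]
    set T := Finset.univ.filter (fun Δ : Matrix (Fin n) (Fin n) (ZMod 2) =>
        IsHankel Δ ∧ Δ ≠ 0 ∧ 2 ^ n < (Kset n Δ).card * 2 ^ R) with hT
    have hchoice : ∀ Δ ∈ T, ∃ p : (V n) × (V n),
        (p.1 ≠ 0 ∧ (∀ i : Fin n, ¬((i : ℕ) < R) → p.1 i = 0) ∧ Matrix.vecMul p.1 Δ = 0) ∧
        (p.2 ≠ 0 ∧ (∀ i : Fin n, (i : ℕ) < n - R → p.2 i = 0) ∧ Matrix.vecMul p.2 Δ = 0) := by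
      intro Δ hΔT
      have hKbig := ((Finset.mem_filter.mp hΔT).2).2.2
      obtain ⟨x, hx0, ⟨c₁, c₂, hxc⟩, hxker⟩ := exC Δ hKbig G1 hG1inj
      obtain ⟨x', hx'0, ⟨c₁', c₂', hxc'⟩, hx'ker⟩ := exC Δ hKbig G2 hG2inj
      refine ⟨(x, x'), ⟨hx0, ?_, hxker⟩, ⟨hx'0, ?_, hx'ker⟩⟩
      · intro i hi
        rw [hxc]
        show G1 c₁ i + G1 c₂ i = 0
        rw [hG1supp c₁ i hi, hG1supp c₂ i hi, add_zero]
      · intro i hi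
        rw [hxc']
        show G2 c₁' i + G2 c₂' i = 0
        rw [hG2supp c₁' i hi, hG2supp c₂' i hi, add_zero]
    set dataF : Matrix (Fin n) (Fin n) (ZMod 2) →
        ((Fin R → ZMod 2) × (Fin R → ZMod 2) × (Fin R → ZMod 2) × (Fin R → ZMod 2)) :=
      fun Δ => if h : Δ ∈ T then
        (fun iR => (Classical.choose (hchoice Δ h)).1 ⟨(iR : ℕ), by omega⟩,
         fun iR => (Classical.choose (hchoice Δ h)).2 ⟨n - R + (iR : ℕ), by omega⟩,
         fun iR => seqD Δ (iR : ℕ),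
         fun iR => seqD Δ (2 * n - 1 - R + (iR : ℕ)))
      else (0, 0, 0, 0) with hdataF
    have happ : ∀ (f : V n) (i i' : Fin n), i = i' → f i = f i' := fun f i i' h => by rw [h]
    calc T.card ≤ (Finset.univ : Finset ((Fin R → ZMod 2) × (Fin R → ZMod 2)
          × (Fin R → ZMod 2) × (Fin R → ZMod 2))).card := by
          apply Finset.card_le_card_of_injOn dataF (fun _ _ => Finset.mem_univ _)
          intro Δ₁ hT₁' Δ₂ hT₂' heq
          have hT₁ : Δ₁ ∈ T := hT₁'
          have hT₂ : Δ₂ ∈ T := hT₂'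
          have hH₁ : IsHankel Δ₁ := ((Finset.mem_filter.mp hT₁).2).1
          have hH₂ : IsHankel Δ₂ := ((Finset.mem_filter.mp hT₂).2).1
          simp only [hdataF, dif_pos hT₁, dif_pos hT₂, Prod.mk.injEq] at heq
          obtain ⟨h1, h2, h3, h4⟩ := heq
          have spec₁ := Classical.choose_spec (hchoice Δ₁ hT₁)
          have spec₂ := Classical.choose_spec (hchoice Δ₂ hT₂)
          set x₁ := (Classical.choose (hchoice Δ₁ hT₁)).1 with hx₁
          set x₂ := (Classical.choose (hchoice Δ₂ hT₂)).1 with hx₂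
          set y₁ := (Classical.choose (hchoice Δ₁ hT₁)).2 with hy₁
          set y₂ := (Classical.choose (hchoice Δ₂ hT₂)).2 with hy₂
          have hx12 : x₁ = x₂ := by
            funext i
            by_cases hi : (i : ℕ) < R
            · have h5 := congrFun h1 ⟨(i : ℕ), hi⟩
              have h6 : x₁ ⟨(i : ℕ), i.isLt⟩ = x₂ ⟨(i : ℕ), i.isLt⟩ := h5
              simpa using h6
            · rw [spec₁.1.2.1 i hi, spec₂.1.2.1 i hi]
          have hy12 : y₁ = y₂ := by
            funext i
            by_cases hi : n - R ≤ (i : ℕ)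
            · have h5 := congrFun h2 ⟨(i : ℕ) - (n - R), by omega⟩
              have h6 : y₁ ⟨n - R + ((i : ℕ) - (n - R)), by omega⟩
                  = y₂ ⟨n - R + ((i : ℕ) - (n - R)), by omega⟩ := h5
              have hieq : (⟨n - R + ((i : ℕ) - (n - R)), by omega⟩ : Fin n) = i :=
                Fin.ext (by show n - R + ((i : ℕ) - (n - R)) = (i : ℕ); omega)
              rw [happ y₁ _ _ hieq.symm, happ y₂ _ _ hieq.symm]
              exact h6
            · push_neg at hi
              rw [spec₁.2.2.1 i hi, spec₂.2.2.1 i hi]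
          set cnat : ℕ → ZMod 2 := fun d => if h : d < n then x₁ ⟨d, h⟩ else 0 with hcnat
          set c'nat : ℕ → ZMod 2 := fun d => if h : d < n then y₁ ⟨d, h⟩ else 0 with hc'nat
          have hcnat_app : ∀ i : Fin n, cnat (i : ℕ) = x₁ i := by
            intro i
            simp only [hcnat]
            rw [dif_pos i.isLt]
          have hc'nat_app : ∀ i : Fin n, c'nat (i : ℕ) = y₁ i := by
            intro i
            simp only [hc'nat]
            rw [dif_pos i.isLt]
          have hseq := seq_unique hR hRn (seqD Δ₁) (seqD Δ₂) cnat c'nat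
            (by
              obtain ⟨i, hi⟩ := Function.ne_iff.mp spec₁.1.1
              have hiR : (i : ℕ) < R := by
                by_contra hc
                exact hi (spec₁.1.2.1 i hc)
              exact ⟨(i : ℕ), hiR, by rw [hcnat_app i]; exact hi⟩)
            (by
              intro i hi
              simp only [hcnat]
              split
              · next hlt => exact spec₁.1.2.1 ⟨i, hlt⟩ (by show ¬ i < R; omega)
              · rfl)
            (by
              obtain ⟨i, hi⟩ := Function.ne_iff.mp spec₁.2.1
              exact ⟨(i : ℕ), by rw [hc'nat_app i]; exact hi⟩)
            (by
              intro i hi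
              simp only [hc'nat]
              split
              · next hlt => exact spec₁.2.2.1 ⟨i, hlt⟩ hi
              · rfl)
            (by
              intro i hi
              simp only [hc'nat]
              rw [dif_neg (by omega)])
            (ker_rec Δ₁ hH₁ x₁ spec₁.1.2.2 cnat hcnat_app)
            (ker_rec Δ₂ hH₂ x₁ (by rw [hx12]; exact spec₂.1.2.2) cnat hcnat_app)
            (ker_rec Δ₁ hH₁ y₁ spec₁.2.2.2 c'nat hc'nat_app)
            (ker_rec Δ₂ hH₂ y₁ (by rw [hy12]; exact spec₂.2.2.2) c'nat hc'nat_app)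
            (by
              intro i hi
              exact congrFun h3 ⟨i, hi⟩)
            (by
              intro i hilo hihi
              have h5 := congrFun h4 ⟨i - (2 * n - 1 - R), by omega⟩
              have h6 : seqD Δ₁ (2 * n - 1 - R + (i - (2 * n - 1 - R)))
                  = seqD Δ₂ (2 * n - 1 - R + (i - (2 * n - 1 - R))) := h5
              have harg : 2 * n - 1 - R + (i - (2 * n - 1 - R)) = i := by omega
              rwa [harg] at h6)
          ext j k
          rw [seqD_apply Δ₁ hH₁ j k, seqD_apply Δ₂ hH₂ j k]
          refine hseq _ ?_
          have := j.isLt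
          have := k.isLt
          omega
      _ = 2 ^ (4 * R) := by
          rw [Finset.card_univ]
          simp only [Fintype.card_prod, Fintype.card_fun, ZMod.card, Fintype.card_fin]
          rw [show 4 * R = R + (R + (R + R)) from by omega, pow_add, pow_add, pow_add]


lemma herm_sum_right {ι α : Type*} [Fintype ι] (s : ι → ℂ) (T : Finset α)
    (c : α → ℂ) (φ : α → ι → ℂ) :
    herm s (fun y => ∑ t ∈ T, c t * φ t y)
      = ∑ t ∈ T, (starRingEnd ℂ) (c t) * herm s (φ t) := by
  unfold herm
  simp_rw [map_sum, _root_.map_mul, Finset.mul_sum]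
  rw [Finset.sum_comm]
  refine Finset.sum_congr rfl fun t _ => Finset.sum_congr rfl fun y _ => ?_
  ring

lemma herm_sum_both {ι α : Type*} [Fintype ι] (T : Finset α) (c : α → ℂ) (φ : α → ι → ℂ) :
    herm (fun y => ∑ t ∈ T, c t * φ t y) (fun y => ∑ t ∈ T, c t * φ t y)
      = ∑ t ∈ T, ∑ t' ∈ T, (c t * (starRingEnd ℂ) (c t')) * herm (φ t) (φ t') := by
  unfold herm
  have h : ∀ y, (∑ t ∈ T, c t * φ t y) * (starRingEnd ℂ) (∑ t' ∈ T, c t' * φ t' y)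
      = ∑ t ∈ T, ∑ t' ∈ T, (c t * (starRingEnd ℂ) (c t')) * (φ t y * (starRingEnd ℂ) (φ t' y)) := by
    intro y
    rw [map_sum, Finset.sum_mul_sum]
    refine Finset.sum_congr rfl fun t _ => Finset.sum_congr rfl fun t' _ => ?_
    rw [_root_.map_mul]
    ring
  simp_rw [h]
  rw [Finset.sum_comm]
  refine Finset.sum_congr rfl fun t _ => ?_
  rw [Finset.sum_comm]
  refine Finset.sum_congr rfl fun t' _ => ?_
  rw [Finset.mul_sum]


lemma le_of_sq_le_sq {x b : ℝ} (h0 : 0 ≤ x) (hb : 0 ≤ b) (h : x ^ 2 ≤ b ^ 2) : x ≤ b := by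
  nlinarith [sq_nonneg (x - b), sq_nonneg (x + b)]

end S19

set_option maxHeartbeats 2000000 in
open S19 in
/-- There are absolute constants C > 0 and c > 0 such that for every
n ≥ 1, every real k ≥ 1 and every nonzero signal s ∈ ℂ^N (N = 2ⁿ), the number of
Hankel codewords heavy for s — pairs (P, ℓ) with P an n×n Hankel matrix over ℤ₂ and
ℓ ∈ ℤ₂ⁿ such that |⟨s, φ_{P,ℓ,0}⟩|² ≥ (1/k)·‖s‖² — is at most C·k^c. -/
theorem stmt_19 :
    ∃ C c : ℝ, 0 < C ∧ 0 < c ∧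
      ∀ (n : ℕ), 1 ≤ n → ∀ k : ℝ, 1 ≤ k →
        ∀ s : (Fin n → ZMod 2) → ℂ, s ≠ 0 →
          (Nat.card {Pl : Matrix (Fin n) (Fin n) (ZMod 2) × (Fin n → ZMod 2) //
              (∀ j k' j' k'' : Fin n, (j : ℕ) + (k' : ℕ) = (j' : ℕ) + (k'' : ℕ) →
                Pl.1 j k' = Pl.1 j' k'')
              ∧ (1 / k) * (∑ y : Fin n → ZMod 2, ‖s y‖ ^ 2)
                  ≤ ‖herm s (rmPhi n Pl.1 Pl.2 0)‖ ^ 2} : ℝ)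
            ≤ C * k ^ c := by
  classical
  refine ⟨1000000, 19, by norm_num, by norm_num, ?_⟩
  intro n hn k hk s hs
  have hk0 : (0:ℝ) < k := lt_of_lt_of_le one_pos hk
  set W : ℝ := N2 s with hWdef
  have hWeq : (∑ y : Fin n → ZMod 2, ‖s y‖ ^ 2) = W := rfl
  have hW : 0 < W := by
    obtain ⟨y, hy⟩ := Function.ne_iff.mp hs
    refine Finset.sum_pos' (fun y _ => by positivity) ⟨y, Finset.mem_univ _, ?_⟩
    exact pow_pos (norm_pos_iff.mpr hy) 2
  set T := Finset.univ.filter (fun Pl : Matrix (Fin n) (Fin n) (ZMod 2) × (Fin n → ZMod 2) =>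
      (∀ j k' j' k'' : Fin n, (j : ℕ) + (k' : ℕ) = (j' : ℕ) + (k'' : ℕ) →
        Pl.1 j k' = Pl.1 j' k'')
      ∧ (1 / k) * (∑ y : Fin n → ZMod 2, ‖s y‖ ^ 2)
          ≤ ‖herm s (rmPhi n Pl.1 Pl.2 0)‖ ^ 2) with hTdef
  have hNat : (Nat.card {Pl : Matrix (Fin n) (Fin n) (ZMod 2) × (Fin n → ZMod 2) //
      (∀ j k' j' k'' : Fin n, (j : ℕ) + (k' : ℕ) = (j' : ℕ) + (k'' : ℕ) →
        Pl.1 j k' = Pl.1 j' k'')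
      ∧ (1 / k) * (∑ y : Fin n → ZMod 2, ‖s y‖ ^ 2)
          ≤ ‖herm s (rmPhi n Pl.1 Pl.2 0)‖ ^ 2} : ℝ) = (T.card : ℝ) := by
    rw [Nat.card_eq_fintype_card, Fintype.card_subtype]
  rw [hNat]
  set M : ℝ := (T.card : ℝ) with hMdef
  have hM0 : 0 ≤ M := Nat.cast_nonneg _
  have hmemH : ∀ t ∈ T, IsHankel t.1 := fun t ht => ((Finset.mem_filter.mp ht).2).1
  have hmemHeavy : ∀ t ∈ T, (1/k) * W ≤ ‖herm s (rmPhi n t.1 t.2 0)‖ ^ 2 := by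
    intro t ht
    have h := ((Finset.mem_filter.mp ht).2).2
    rwa [hWeq] at h
  have hsymm : ∀ t ∈ T, ∀ j k', t.1 j k' = t.1 k' j := by
    intro t ht j k'
    exact hmemH t ht j k' k' j (by omega)
  set a : (Matrix (Fin n) (Fin n) (ZMod 2) × (Fin n → ZMod 2)) → ℂ :=
    fun t => herm s (rmPhi n t.1 t.2 0) with ha
  have haW : ∀ t, ‖a t‖ ^ 2 ≤ W := by
    intro t
    calc ‖a t‖ ^ 2 ≤ N2 s * N2 (rmPhi n t.1 t.2 0) := herm_cs _ _
      _ = W := by rw [N2_phi, mul_one]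
  -- fiber bound
  have hfiber : ∀ P, ((T.filter (fun t => t.1 = P)).card : ℝ) ≤ k := by
    intro P
    have hsum1 : ∑ t ∈ T.filter (fun t => t.1 = P), ‖a t‖ ^ 2 ≤ W := by
      have himg : ∑ ℓ ∈ (T.filter (fun t => t.1 = P)).image Prod.snd,
            ‖herm s (rmPhi n P ℓ 0)‖ ^ 2
          = ∑ t ∈ T.filter (fun t => t.1 = P), ‖a t‖ ^ 2 := by
        rw [Finset.sum_image ?inj]
        · refine Finset.sum_congr rfl fun t ht => ?_
          have h1 : t.1 = P := (Finset.mem_filter.mp ht).2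
          simp only [ha]
          rw [h1]
        case inj =>
          intro t ht t' ht' hss
          have h1 : t.1 = P := (Finset.mem_filter.mp ht).2
          have h2 : t'.1 = P := (Finset.mem_filter.mp ht').2
          exact Prod.ext (h1.trans h2.symm) hss
      rw [← himg]
      calc ∑ ℓ ∈ (T.filter (fun t => t.1 = P)).image Prod.snd,
            ‖herm s (rmPhi n P ℓ 0)‖ ^ 2
          ≤ ∑ ℓ : Fin n → ZMod 2, ‖herm s (rmPhi n P ℓ 0)‖ ^ 2 :=
            Finset.sum_le_sum_of_subset_of_nonneg (Finset.subset_univ _)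
              (fun _ _ _ => by positivity)
        _ = W := parseval P s
    have hsum2 : ((T.filter (fun t => t.1 = P)).card : ℝ) * ((1/k) * W)
        ≤ ∑ t ∈ T.filter (fun t => t.1 = P), ‖a t‖ ^ 2 := by
      have h := Finset.card_nsmul_le_sum (T.filter (fun t => t.1 = P))
        (fun t => ‖a t‖ ^ 2) ((1/k) * W)
        (fun t ht => hmemHeavy t (Finset.mem_of_mem_filter t ht))
      simpa [nsmul_eq_mul] using h
    have h3 : ((T.filter (fun t => t.1 = P)).card : ℝ) * ((1/k) * W) ≤ W :=
      le_trans hsum2 hsum1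
    have h4 : ((T.filter (fun t => t.1 = P)).card : ℝ) * W ≤ k * W := by
      have h5 : ((T.filter (fun t => t.1 = P)).card : ℝ) * W
          = (((T.filter (fun t => t.1 = P)).card : ℝ) * ((1/k) * W)) * k := by
        field_simp
      rw [h5]
      calc (((T.filter (fun t => t.1 = P)).card : ℝ) * ((1/k) * W)) * k ≤ W * k :=
            mul_le_mul_of_nonneg_right h3 (le_of_lt hk0)
        _ = k * W := by ring
    exact le_of_mul_le_mul_right h4 hW
  -- choice of R
  set R : ℕ := Nat.clog 2 (Nat.ceil ((4:ℝ) * k ^ 4)) with hRdef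
  have hceil4 : 4 ≤ Nat.ceil ((4:ℝ) * k ^ 4) := by
    have h1 : (4:ℝ) ≤ 4 * k ^ 4 := by nlinarith [one_le_pow₀ hk (n := 4)]
    calc 4 = Nat.ceil ((4:ℝ)) := by simp
      _ ≤ Nat.ceil ((4:ℝ) * k ^ 4) := Nat.ceil_le_ceil h1
  have hR1 : 1 ≤ R := by
    rw [hRdef]
    exact Nat.clog_pos one_lt_two (by omega)
  have h2Rlow : (4:ℝ) * k ^ 4 ≤ (2:ℝ) ^ R := by
    have h1 := Nat.le_pow_clog one_lt_two (Nat.ceil ((4:ℝ) * k ^ 4))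
    calc (4:ℝ) * k ^ 4 ≤ (Nat.ceil ((4:ℝ) * k ^ 4) : ℝ) := Nat.le_ceil _
      _ ≤ ((2 ^ R : ℕ) : ℝ) := by exact_mod_cast h1
      _ = (2:ℝ) ^ R := by push_cast; rfl
  have h2Rhigh : (2:ℝ) ^ R ≤ 10 * k ^ 4 := by
    have h1 : (2:ℕ) ^ (Nat.clog 2 (Nat.ceil ((4:ℝ) * k ^ 4))).pred
        < Nat.ceil ((4:ℝ) * k ^ 4) :=
      Nat.pow_pred_clog_lt_self one_lt_two (by omega)
    have h2 : (2:ℕ) ^ (R - 1) < Nat.ceil ((4:ℝ) * k ^ 4) := by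
      rw [hRdef]
      exact h1
    have h3 : (Nat.ceil ((4:ℝ) * k ^ 4) : ℝ) < 4 * k ^ 4 + 1 :=
      Nat.ceil_lt_add_one (by positivity)
    have h4 : ((2:ℝ)) ^ (R - 1) < 4 * k ^ 4 + 1 := by
      calc ((2:ℝ)) ^ (R - 1) = ((2 ^ (R - 1) : ℕ) : ℝ) := by push_cast; rfl
        _ < (Nat.ceil ((4:ℝ) * k ^ 4) : ℝ) := Nat.cast_lt.mpr h2
        _ < 4 * k ^ 4 + 1 := h3
    have h5 : (2:ℝ) ^ R = 2 * (2:ℝ) ^ (R - 1) := by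
      conv_lhs => rw [show R = (R - 1) + 1 from by omega]
      rw [pow_succ]
      ring
    rw [h5]
    nlinarith [h4, one_le_pow₀ hk (n := 4)]
  -- pairwise inner products
  set f : (Matrix (Fin n) (Fin n) (ZMod 2) × (Fin n → ZMod 2)) →
      (Matrix (Fin n) (Fin n) (ZMod 2) × (Fin n → ZMod 2)) → ℝ :=
    fun t t' => ‖herm (rmPhi n t.1 t.2 0) (rmPhi n t'.1 t'.2 0)‖ with hfdef
  have hf0 : ∀ t t', 0 ≤ f t t' := fun t t' => norm_nonneg _
  have hf1 : ∀ t t', f t t' ≤ 1 := by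
    intro t t'
    have h1 : f t t' ^ 2 ≤ 1 := by
      have h2 := herm_cs (rmPhi n t.1 t.2 0) (rmPhi n t'.1 t'.2 0)
      rwa [N2_phi, N2_phi, mul_one] at h2
    exact le_of_sq_le_sq (hf0 t t') (by norm_num) (by rwa [one_pow])
  have hsmallf : ∀ t ∈ T, ∀ t' ∈ T, ¬(2 ^ n < (Kset n (t.1 + t'.1)).card * 2 ^ R) →
      f t t' ≤ 1 / (2 * k ^ 2) := by
    intro t ht t' ht' hKle
    push_neg at hKle
    have hg := gauss t.1 t'.1 (hsymm t ht) (hsymm t' ht') t.2 t'.2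
    have h1 : ((Kset n (t.1 + t'.1)).card : ℝ) / 2 ^ n ≤ 1 / (2:ℝ) ^ R := by
      rw [div_le_div_iff₀ (by positivity) (by positivity)]
      calc ((Kset n (t.1 + t'.1)).card : ℝ) * 2 ^ R
          = (((Kset n (t.1 + t'.1)).card * 2 ^ R : ℕ) : ℝ) := by push_cast; rfl
        _ ≤ ((2 ^ n : ℕ) : ℝ) := Nat.cast_le.mpr hKle
        _ = (2:ℝ) ^ n := by push_cast; rfl
        _ = 1 * 2 ^ n := by ring
    have h2 : 1 / (2:ℝ) ^ R ≤ 1 / (4 * k ^ 4) :=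
      one_div_le_one_div_of_le (by positivity) h2Rlow
    have h3 : f t t' ^ 2 ≤ (1 / (2 * k ^ 2)) ^ 2 := by
      have h4 : (1 / (2 * k ^ 2) : ℝ) ^ 2 = 1 / (4 * k ^ 4) := by
        field_simp
        ring
      rw [h4]
      exact le_trans hg (le_trans h1 h2)
    exact le_of_sq_le_sq (hf0 t t') (by positivity) h3
  have hsamef : ∀ t t', t.1 = t'.1 → f t t' = (if t' = t then 1 else 0) := by
    intro t t' h1
    by_cases h2 : t'.2 = t.2
    · have h3 : t' = t := Prod.ext h1.symm h2
      rw [h3, if_pos rfl, hfdef]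
      simp only
      rw [herm_phi_self]
      exact norm_one
    · rw [if_neg (fun hc => h2 (by rw [hc])), hfdef]
      simp only
      rw [← h1, herm_phi_same t.1 t.2 t'.2 (fun hc => h2 hc.symm), norm_zero]
  -- the pairwise sum
  set Spair : ℝ := ∑ t ∈ T, ∑ t' ∈ T, f t t' with hSpairdef
  have hSpairBound : Spair ≤ M + M ^ 2 * (1 / (2 * k ^ 2)) + M * ((2:ℝ) ^ (4 * R) * k) := by
    have hper : ∀ t ∈ T, ∑ t' ∈ T, f t t'
        ≤ 1 + M * (1 / (2 * k ^ 2)) + (2:ℝ) ^ (4 * R) * k := by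
      intro t ht
      rw [← Finset.sum_filter_add_sum_filter_not T (fun t' => t'.1 = t.1) (f t)]
      have hA : ∑ t' ∈ T.filter (fun t' => t'.1 = t.1), f t t' ≤ 1 := by
        have hcongr : ∀ t' ∈ T.filter (fun t' => t'.1 = t.1), f t t' = if t' = t then 1 else 0 :=
          fun t' ht' => hsamef t t' ((Finset.mem_filter.mp ht').2).symm
        rw [Finset.sum_congr rfl hcongr, Finset.sum_ite_eq' _ t (fun _ => (1:ℝ))]
        split <;> norm_num
      rw [← Finset.sum_filter_add_sum_filter_not (T.filter (fun t' => ¬ t'.1 = t.1))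
        (fun t' => 2 ^ n < (Kset n (t.1 + t'.1)).card * 2 ^ R) (f t)]
      have hB : ∑ t' ∈ (T.filter (fun t' => ¬ t'.1 = t.1)).filter
            (fun t' => ¬ (2 ^ n < (Kset n (t.1 + t'.1)).card * 2 ^ R)), f t t'
          ≤ M * (1 / (2 * k ^ 2)) := by
        calc ∑ t' ∈ (T.filter (fun t' => ¬ t'.1 = t.1)).filter
              (fun t' => ¬ (2 ^ n < (Kset n (t.1 + t'.1)).card * 2 ^ R)), f t t'
            ≤ ∑ t' ∈ (T.filter (fun t' => ¬ t'.1 = t.1)).filter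
              (fun t' => ¬ (2 ^ n < (Kset n (t.1 + t'.1)).card * 2 ^ R)), (1 / (2 * k ^ 2)) := by
              refine Finset.sum_le_sum fun t' ht' => ?_
              have h1 := (Finset.mem_filter.mp ht').2
              have h2 := Finset.mem_of_mem_filter t' (Finset.mem_of_mem_filter t' ht')
              exact hsmallf t ht t' h2 h1
          _ = (((T.filter (fun t' => ¬ t'.1 = t.1)).filter
              (fun t' => ¬ (2 ^ n < (Kset n (t.1 + t'.1)).card * 2 ^ R))).card : ℝ)
                * (1 / (2 * k ^ 2)) := by
              rw [Finset.sum_const, nsmul_eq_mul]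
          _ ≤ M * (1 / (2 * k ^ 2)) := by
              refine mul_le_mul_of_nonneg_right ?_ (by positivity)
              rw [hMdef]
              exact_mod_cast Nat.cast_le.mpr (Finset.card_le_card
                ((Finset.filter_subset _ _).trans (Finset.filter_subset _ _)))
      have hC : ∑ t' ∈ (T.filter (fun t' => ¬ t'.1 = t.1)).filter
            (fun t' => 2 ^ n < (Kset n (t.1 + t'.1)).card * 2 ^ R), f t t'
          ≤ (2:ℝ) ^ (4 * R) * k := by
        set S3 := (T.filter (fun t' => ¬ t'.1 = t.1)).filter
            (fun t' => 2 ^ n < (Kset n (t.1 + t'.1)).card * 2 ^ R) with hS3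
        set LowSet := Finset.univ.filter (fun Δ : Matrix (Fin n) (Fin n) (ZMod 2) =>
            IsHankel Δ ∧ Δ ≠ 0 ∧ 2 ^ n < (Kset n Δ).card * 2 ^ R) with hLowSet
        have hsub : S3 ⊆ LowSet.biUnion (fun Δ => T.filter (fun t' => t'.1 = t.1 + Δ)) := by
          intro t' ht'
          obtain ⟨h4, h5⟩ := Finset.mem_filter.mp ht'
          obtain ⟨h6, h7⟩ := Finset.mem_filter.mp h4
          refine Finset.mem_biUnion.mpr ⟨t.1 + t'.1, Finset.mem_filter.mpr
            ⟨Finset.mem_univ _, ?_, ?_, h5⟩, Finset.mem_filter.mpr ⟨h6, ?_⟩⟩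
          · intro j kk j' kk' hjk
            show t.1 j kk + t'.1 j kk = t.1 j' kk' + t'.1 j' kk'
            rw [hmemH t ht j kk j' kk' hjk, hmemH t' h6 j kk j' kk' hjk]
          · intro h0
            apply h7
            ext j kk
            have h8 : t.1 j kk + t'.1 j kk = 0 := by
              have := congrFun (congrFun h0 j) kk
              exact this
            have h9 : t'.1 j kk = - t.1 j kk := eq_neg_of_add_eq_zero_right h8
            rwa [CharTwo.neg_eq] at h9
          · ext j kk
            show t'.1 j kk = t.1 j kk + (t.1 j kk + t'.1 j kk)
            rw [← add_assoc, CharTwo.add_self_eq_zero, zero_add]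
        calc ∑ t' ∈ S3, f t t' ≤ ∑ t' ∈ S3, 1 := Finset.sum_le_sum fun t' _ => hf1 t t'
          _ = (S3.card : ℝ) := by rw [Finset.sum_const, nsmul_eq_mul, mul_one]
          _ ≤ ((LowSet.biUnion (fun Δ => T.filter (fun t' => t'.1 = t.1 + Δ))).card : ℝ) :=
              Nat.cast_le.mpr (Finset.card_le_card hsub)
          _ ≤ ((∑ Δ ∈ LowSet, (T.filter (fun t' => t'.1 = t.1 + Δ)).card : ℕ) : ℝ) :=
              Nat.cast_le.mpr Finset.card_biUnion_le
          _ = ∑ Δ ∈ LowSet, ((T.filter (fun t' => t'.1 = t.1 + Δ)).card : ℝ) := by push_cast; rfl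
          _ ≤ ∑ Δ ∈ LowSet, k := Finset.sum_le_sum fun Δ _ => hfiber (t.1 + Δ)
          _ = (LowSet.card : ℝ) * k := by rw [Finset.sum_const, nsmul_eq_mul]
          _ ≤ (2:ℝ) ^ (4 * R) * k := by
              refine mul_le_mul_of_nonneg_right ?_ (le_of_lt hk0)
              calc (LowSet.card : ℝ) ≤ ((2 ^ (4 * R) : ℕ) : ℝ) :=
                    Nat.cast_le.mpr (count_low hR1)
                _ = (2:ℝ) ^ (4 * R) := by push_cast; rfl
      linarith [hA, hB, hC]
    calc Spair ≤ ∑ _t ∈ T, (1 + M * (1 / (2 * k ^ 2)) + (2:ℝ) ^ (4 * R) * k) :=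
          Finset.sum_le_sum hper
      _ = M * (1 + M * (1 / (2 * k ^ 2)) + (2:ℝ) ^ (4 * R) * k) := by
          rw [Finset.sum_const, nsmul_eq_mul, hMdef]
      _ = M + M ^ 2 * (1 / (2 * k ^ 2)) + M * ((2:ℝ) ^ (4 * R) * k) := by ring
  -- the quadratic argument
  set A : ℝ := ∑ t ∈ T, ‖a t‖ ^ 2 with hAdef
  have hA0 : 0 ≤ A := Finset.sum_nonneg fun t _ => by positivity
  have hAlow : M * ((1/k) * W) ≤ A := by
    have h := Finset.card_nsmul_le_sum T (fun t => ‖a t‖ ^ 2) ((1/k) * W)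
      (fun t ht => hmemHeavy t ht)
    simpa [nsmul_eq_mul] using h
  set v : (Fin n → ZMod 2) → ℂ := fun y => ∑ t ∈ T, a t * rmPhi n t.1 t.2 0 y with hvdef
  have hsv : herm s v = (A : ℂ) := by
    rw [hvdef, herm_sum_right s T a (fun t => rmPhi n t.1 t.2 0), hAdef]
    push_cast
    refine Finset.sum_congr rfl fun t _ => ?_
    have h1 : herm s (rmPhi n t.1 t.2 0) = a t := rfl
    rw [h1, mul_comm, Complex.mul_conj]
    norm_cast
    rw [Complex.sq_norm]
  have hAv : A ^ 2 ≤ W * N2 v := by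
    have h1 := herm_cs s v
    rw [hsv, Complex.norm_real, Real.norm_eq_abs, abs_of_nonneg hA0] at h1
    exact h1
  have hNv : N2 v ≤ W * Spair := by
    have h1 := herm_sum_both T a (fun t => rmPhi n t.1 t.2 0)
    have h2 : N2 v = ‖herm v v‖ := by
      rw [herm_self, Complex.norm_real, Real.norm_eq_abs, abs_of_nonneg (N2_nonneg v)]
    rw [h2, hvdef, h1]
    calc ‖∑ t ∈ T, ∑ t' ∈ T, (a t * (starRingEnd ℂ) (a t'))
            * herm (rmPhi n t.1 t.2 0) (rmPhi n t'.1 t'.2 0)‖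
        ≤ ∑ t ∈ T, ‖∑ t' ∈ T, (a t * (starRingEnd ℂ) (a t'))
            * herm (rmPhi n t.1 t.2 0) (rmPhi n t'.1 t'.2 0)‖ := norm_sum_le _ _
      _ ≤ ∑ t ∈ T, ∑ t' ∈ T, ‖(a t * (starRingEnd ℂ) (a t'))
            * herm (rmPhi n t.1 t.2 0) (rmPhi n t'.1 t'.2 0)‖ :=
          Finset.sum_le_sum fun t _ => norm_sum_le _ _
      _ ≤ ∑ t ∈ T, ∑ t' ∈ T, W * f t t' := by
          refine Finset.sum_le_sum fun t _ => Finset.sum_le_sum fun t' _ => ?_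
          rw [norm_mul, norm_mul, Complex.norm_conj]
          have h3 : ‖a t‖ * ‖a t'‖ ≤ W := by
            have h4 : ‖a t‖ ≤ Real.sqrt W := by
              rw [show ‖a t‖ = Real.sqrt (‖a t‖ ^ 2) from
                (Real.sqrt_sq (norm_nonneg _)).symm]
              exact Real.sqrt_le_sqrt (haW t)
            have h5 : ‖a t'‖ ≤ Real.sqrt W := by
              rw [show ‖a t'‖ = Real.sqrt (‖a t'‖ ^ 2) from
                (Real.sqrt_sq (norm_nonneg _)).symm]
              exact Real.sqrt_le_sqrt (haW t')
            calc ‖a t‖ * ‖a t'‖ ≤ Real.sqrt W * Real.sqrt W :=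
                  mul_le_mul h4 h5 (norm_nonneg _) (Real.sqrt_nonneg _)
              _ = W := Real.mul_self_sqrt (le_of_lt hW)
          exact mul_le_mul_of_nonneg_right h3 (hf0 t t') |>.trans
            (le_of_eq (by rw [hfdef]))
      _ = W * Spair := by
          rw [hSpairdef, Finset.mul_sum]
          refine Finset.sum_congr rfl fun t _ => ?_
          rw [Finset.mul_sum]
  have hfinal2 : M ^ 2 * (1/k) ^ 2 ≤ Spair := by
    have hfinal1 : (M * ((1/k) * W)) ^ 2 ≤ W * (W * Spair) := by
      calc (M * ((1/k) * W)) ^ 2 ≤ A ^ 2 := by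
            refine pow_le_pow_left₀ ?_ hAlow 2
            exact mul_nonneg hM0 (mul_nonneg (by positivity) (le_of_lt hW))
        _ ≤ W * N2 v := hAv
        _ ≤ W * (W * Spair) := mul_le_mul_of_nonneg_left hNv (le_of_lt hW)
    have heq : (M * ((1/k) * W)) ^ 2 = (M ^ 2 * (1/k) ^ 2) * W ^ 2 := by ring
    have heq2 : W * (W * Spair) = Spair * W ^ 2 := by ring
    rw [heq, heq2] at hfinal1
    exact le_of_mul_le_mul_right hfinal1 (pow_pos hW 2)
  -- final arithmetic
  have hcomb : M ^ 2 * (1/k) ^ 2 ≤ M + M ^ 2 * (1 / (2 * k ^ 2)) + M * ((2:ℝ) ^ (4 * R) * k) :=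
    le_trans hfinal2 hSpairBound
  have h2R4 : (2:ℝ) ^ (4 * R) ≤ 10 ^ 4 * k ^ 16 := by
    have h1 : (2:ℝ) ^ (4 * R) = ((2:ℝ) ^ R) ^ 4 := by
      rw [show 4 * R = R * 4 from by ring, pow_mul]
    rw [h1]
    calc ((2:ℝ) ^ R) ^ 4 ≤ (10 * k ^ 4) ^ 4 := by
          refine pow_le_pow_left₀ ?_ h2Rhigh 4
          positivity
      _ = 10 ^ 4 * k ^ 16 := by ring
  have hMbound : M ≤ 2 * k ^ 2 + 2 * k ^ 3 * (2:ℝ) ^ (4 * R) := by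
    set B : ℝ := (2:ℝ) ^ (4 * R) with hB
    have hB0 : (0:ℝ) < B := by positivity
    have h1 : M * M ≤ M * (2 * k ^ 2 + 2 * k ^ 3 * B) := by
      have h2 : M ^ 2 * (1/k) ^ 2 * (2 * k ^ 2)
          ≤ (M + M ^ 2 * (1 / (2 * k ^ 2)) + M * (B * k)) * (2 * k ^ 2) :=
        mul_le_mul_of_nonneg_right hcomb (by positivity)
      have e1 : M ^ 2 * (1/k) ^ 2 * (2 * k ^ 2) = 2 * M ^ 2 := by
        field_simp
      have e2 : (M + M ^ 2 * (1 / (2 * k ^ 2)) + M * (B * k)) * (2 * k ^ 2)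
          = 2 * k ^ 2 * M + M ^ 2 + 2 * k ^ 3 * M * B := by
        field_simp
      rw [e1, e2] at h2
      nlinarith [h2]
    rcases eq_or_lt_of_le hM0 with h0 | h0
    · rw [← h0]
      positivity
    · exact le_of_mul_le_mul_left h1 h0
  calc M ≤ 2 * k ^ 2 + 2 * k ^ 3 * (2:ℝ) ^ (4 * R) := hMbound
    _ ≤ 2 * k ^ 2 + 2 * k ^ 3 * (10 ^ 4 * k ^ 16) := by
        refine add_le_add_right (mul_le_mul_of_nonneg_left h2R4 (by positivity)) _
    _ = 2 * k ^ 2 + 20000 * k ^ 19 := by ring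
    _ ≤ 1000000 * k ^ (19:ℕ) := by
        have h1 : k ^ 2 ≤ k ^ 19 := pow_le_pow_right₀ hk (by omega)
        nlinarith [h1, pow_nonneg (le_of_lt hk0) 19]
    _ = 1000000 * k ^ (19:ℝ) := by
        rw [show (19:ℝ) = ((19:ℕ):ℝ) from by norm_num, Real.rpow_natCast]
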